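/- Let X be a Banach space, J a closed two-sided ideal of B(X), and Q ∈ B(X) an idempotent with Ran(Q) isomorphic to its square and Q ∉ J. Then there exist mutually orthogonal idempotents Q₁, Q₂ ∈ B(X), both not in J, such that π(Q₁) < π(Q) and π(Q₂) < π(Q) in the idempotent order of B(X)/J, where π is the quotient map. -/

import Mathlib

/-- Let `J` be a closed two-sided ideal of `B(X)` and `Q ∈ B(X)` an idempotent
with range isomorphic to its square and `Q ∉ J`. Then there exist mutually orthogonal
idempotents `Q₁, Q₂ ∉ J` whose classes in `B(X)/J` are strictly below the class of `Q` in the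
idempotent order: `π(Q)π(Qᵢ) = π(Qᵢ) = π(Qᵢ)π(Q)` and `π(Qᵢ) ≠ π(Q)`, expressed via
membership of differences in `J`. -/
theorem idempotent_strictly_splits_mod_ideal
    {X : Type*} [NormedAddCommGroup X] [NormedSpace ℂ X] [CompleteSpace X]
    (J : TwoSidedIdeal (X →L[ℂ] X)) (hJc : IsClosed (J : Set (X →L[ℂ] X)))
    (Q : X →L[ℂ] X) (hQ : Q * Q = Q) (hQJ : Q ∉ J)
    (hsq : Nonempty ((LinearMap.range (Q : X →ₗ[ℂ] X)) ≃L[ℂ]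
      ((LinearMap.range (Q : X →ₗ[ℂ] X)) × (LinearMap.range (Q : X →ₗ[ℂ] X))))) :
    ∃ Q₁ Q₂ : X →L[ℂ] X,
      Q₁ * Q₁ = Q₁ ∧ Q₂ * Q₂ = Q₂ ∧ Q₁ * Q₂ = 0 ∧ Q₂ * Q₁ = 0 ∧
      Q₁ ∉ J ∧ Q₂ ∉ J ∧
      (Q * Q₁ - Q₁ ∈ J ∧ Q₁ * Q - Q₁ ∈ J ∧ Q₁ - Q ∉ J) ∧
      (Q * Q₂ - Q₂ ∈ J ∧ Q₂ * Q - Q₂ ∈ J ∧ Q₂ - Q ∉ J) := by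
  classical
  obtain ⟨φ⟩ := hsq
  set R := LinearMap.range (Q : X →ₗ[ℂ] X) with hRdef
  have hmem : ∀ x, Q x ∈ R := fun x => ⟨x, rfl⟩
  let Qr : X →L[ℂ] R := Q.codRestrict R hmem
  let ι : R →L[ℂ] X := R.subtypeL
  have hQidem : ∀ x, Q (Q x) = Q x := by
    intro x
    have := DFunLike.congr_fun hQ x
    simpa [ContinuousLinearMap.mul_apply] using this
  have hfix : ∀ r : R, Q (r : X) = (r : X) := by
    rintro ⟨_, y, rfl⟩
    exact hQidem y
  have hQrι : ∀ r : R, Qr (ι r) = r := by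
    intro r
    apply Subtype.ext
    simpa [Qr, ι] using hfix r
  have hQrQ : ∀ x, Qr (Q x) = Qr x := by
    intro x
    apply Subtype.ext
    simpa [Qr] using hQidem x
  let P₁ : R →L[ℂ] R := (φ.symm : R × R →L[ℂ] R) ∘L (ContinuousLinearMap.inl ℂ R R) ∘L
      (ContinuousLinearMap.fst ℂ R R) ∘L (φ : R →L[ℂ] R × R)
  let P₂ : R →L[ℂ] R := (φ.symm : R × R →L[ℂ] R) ∘L (ContinuousLinearMap.inr ℂ R R) ∘L
      (ContinuousLinearMap.snd ℂ R R) ∘L (φ : R →L[ℂ] R × R)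
  let Q₁ : X →L[ℂ] X := ι ∘L P₁ ∘L Qr
  let Q₂ : X →L[ℂ] X := ι ∘L P₂ ∘L Qr
  -- basic pointwise descriptions
  have hQ₁x : ∀ x, Q₁ x = ι (φ.symm ((φ (Qr x)).1, 0)) := by
    intro x; simp [Q₁, P₁]
  have hQ₂x : ∀ x, Q₂ x = ι (φ.symm (0, (φ (Qr x)).2)) := by
    intro x; simp [Q₂, P₂]
  have hQrQ₁ : ∀ x, Qr (Q₁ x) = φ.symm ((φ (Qr x)).1, 0) := by
    intro x; rw [hQ₁x]; exact hQrι _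
  have hQrQ₂ : ∀ x, Qr (Q₂ x) = φ.symm (0, (φ (Qr x)).2) := by
    intro x; rw [hQ₂x]; exact hQrι _
  have h11 : Q₁ * Q₁ = Q₁ := by
    ext x
    rw [ContinuousLinearMap.mul_apply, hQ₁x (Q₁ x), hQrQ₁]
    simp [hQ₁x]
  have h22 : Q₂ * Q₂ = Q₂ := by
    ext x
    rw [ContinuousLinearMap.mul_apply, hQ₂x (Q₂ x), hQrQ₂]
    simp [hQ₂x]
  have h12 : Q₁ * Q₂ = 0 := by
    ext x
    rw [ContinuousLinearMap.mul_apply, hQ₁x (Q₂ x), hQrQ₂]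
    simp
    change ι (φ.symm 0) = 0
    simp
  have h21 : Q₂ * Q₁ = 0 := by
    ext x
    rw [ContinuousLinearMap.mul_apply, hQ₂x (Q₁ x), hQrQ₁]
    simp
    change ι (φ.symm 0) = 0
    simp
  have hQQ₁ : Q * Q₁ = Q₁ := by
    ext x
    rw [ContinuousLinearMap.mul_apply, hQ₁x]
    exact hfix _
  have hQQ₂ : Q * Q₂ = Q₂ := by
    ext x
    rw [ContinuousLinearMap.mul_apply, hQ₂x]
    exact hfix _
  have hQ₁Q : Q₁ * Q = Q₁ := by
    ext x
    rw [ContinuousLinearMap.mul_apply, hQ₁x, hQ₁x, hQrQ]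
  have hQ₂Q : Q₂ * Q = Q₂ := by
    ext x
    rw [ContinuousLinearMap.mul_apply, hQ₂x, hQ₂x, hQrQ]
  have hsum : Q₁ + Q₂ = Q := by
    ext x
    have : Q₁ x + Q₂ x = ι (φ.symm ((φ (Qr x)).1, 0) + φ.symm (0, (φ (Qr x)).2)) := by
      rw [hQ₁x, hQ₂x, map_add]
    rw [ContinuousLinearMap.add_apply, this, ← map_add]
    have : ((φ (Qr x)).1, (0 : R)) + ((0 : R), (φ (Qr x)).2) = φ (Qr x) := by
      ext <;> simp
    rw [this, φ.symm_apply_apply]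
    simp [ι, Qr]
  -- equivalence: Qᵢ ∈ J would force Q ∈ J
  have hJ1 : Q₁ ∈ J → Q ∈ J := by
    intro h
    let S : X →L[ℂ] X := ι ∘L (ContinuousLinearMap.fst ℂ R R) ∘L (φ : R →L[ℂ] R × R) ∘L Qr
    let T : X →L[ℂ] X := ι ∘L (φ.symm : R × R →L[ℂ] R) ∘L (ContinuousLinearMap.inl ℂ R R) ∘L Qr
    have key : S * Q₁ * T = Q := by
      ext x
      have hTx : T x = ι (φ.symm ((Qr x), 0)) := by simp [T]
      have h1 : Q₁ (T x) = ι (φ.symm ((Qr x), 0)) := by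
        rw [hQ₁x, hTx, hQrι]
        simp
      show S (Q₁ (T x)) = Q x
      rw [h1]
      simp only [S, ContinuousLinearMap.comp_apply]
      rw [hQrι]
      simp [ι, Qr]
    rw [← key]
    exact J.mul_mem_right _ _ (J.mul_mem_left _ _ h)
  have hJ2 : Q₂ ∈ J → Q ∈ J := by
    intro h
    let S : X →L[ℂ] X := ι ∘L (ContinuousLinearMap.snd ℂ R R) ∘L (φ : R →L[ℂ] R × R) ∘L Qr
    let T : X →L[ℂ] X := ι ∘L (φ.symm : R × R →L[ℂ] R) ∘L (ContinuousLinearMap.inr ℂ R R) ∘L Qr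
    have key : S * Q₂ * T = Q := by
      ext x
      have hTx : T x = ι (φ.symm (0, (Qr x))) := by simp [T]
      have h1 : Q₂ (T x) = ι (φ.symm (0, (Qr x))) := by
        rw [hQ₂x, hTx, hQrι]
        simp
      show S (Q₂ (T x)) = Q x
      rw [h1]
      simp only [S, ContinuousLinearMap.comp_apply]
      rw [hQrι]
      simp [ι, Qr]
    rw [← key]
    exact J.mul_mem_right _ _ (J.mul_mem_left _ _ h)
  have hQ₁J : Q₁ ∉ J := fun h => hQJ (hJ1 h)
  have hQ₂J : Q₂ ∉ J := fun h => hQJ (hJ2 h)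
  refine ⟨Q₁, Q₂, h11, h22, h12, h21, hQ₁J, hQ₂J,
    ⟨by rw [hQQ₁]; simpa using J.zero_mem, by rw [hQ₁Q]; simpa using J.zero_mem, ?_⟩,
    ⟨by rw [hQQ₂]; simpa using J.zero_mem, by rw [hQ₂Q]; simpa using J.zero_mem, ?_⟩⟩
  · have hd : Q₁ - Q = -Q₂ := by rw [← hsum]; abel
    rw [hd]
    intro h
    exact hQ₂J (by simpa using J.neg_mem h)
  · have hd : Q₂ - Q = -Q₁ := by rw [← hsum]; abel
    rw [hd]
    intro h
    exact hQ₁J (by simpa using J.neg_mem h)
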